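/- Let F̂(s,t) be twice continuously differentiable and set F(x,t) := F̂(s(x,t),t). Then for all t ∈ (0,T] and all x ∈ (0,1) with x ≠ d: (𝓛F)(x,t) = g(x,t)·(L̂_d F̂)(s(x,t),t) + √(g(x,t))·(a(x,t) − a(d,t))·∂F/∂x(x,t), where (L̂_d F̂)(s,t) := −ε ∂²F̂/∂s² + â(d(t),t) ∂F̂/∂s + ∂F̂/∂t. -/

import Mathlib

lemma deriv_affine_comp (f : ℝ → ℝ) (hf : Differentiable ℝ f) (c b x : ℝ) :
    deriv (fun x' => f (c * x' + b)) x = c * deriv f (c * x + b) := by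
  have h1 : HasDerivAt (fun x' : ℝ => c * x' + b) c x := by
    simpa using ((hasDerivAt_id x).const_mul c).add_const b
  have h2 : HasDerivAt f (deriv f (c * x + b)) (c * x + b) := (hf _).hasDerivAt
  have h3 : HasDerivAt (fun x' => f (c * x' + b)) (deriv f (c * x + b) * c) x := h2.comp x h1
  rw [h3.deriv]; ring

lemma iter2_affine_comp (f : ℝ → ℝ) (hf : ContDiff ℝ 2 f) (c b x : ℝ) :
    iteratedDeriv 2 (fun x' => f (c * x' + b)) x = c ^ 2 * iteratedDeriv 2 f (c * x + b) := by
  have hdf : ContDiff ℝ 1 (deriv f) := by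
    have : ContDiff ℝ (1 + 1) f := by norm_num [hf]
    exact (contDiff_succ_iff_deriv.mp this).2.2
  have hf1 : Differentiable ℝ f := hf.differentiable two_ne_zero
  have hdf1 : Differentiable ℝ (deriv f) := hdf.differentiable one_ne_zero
  have e1 : deriv (fun x' => f (c * x' + b)) = fun x' => c * deriv f (c * x' + b) :=
    funext fun y => deriv_affine_comp f hf1 c b y
  rw [show (2 : ℕ) = 1 + 1 from rfl, iteratedDeriv_succ, iteratedDeriv_one,
    iteratedDeriv_succ, iteratedDeriv_one, e1]
  have h1 : HasDerivAt (fun x' : ℝ => c * x' + b) c x := by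
    simpa using ((hasDerivAt_id x).const_mul c).add_const b
  have h2 : HasDerivAt (deriv f) (deriv (deriv f) (c * x + b)) (c * x + b) :=
    (hdf1 _).hasDerivAt
  have h3 : HasDerivAt (fun x' => c * deriv f (c * x' + b))
      (c * (deriv (deriv f) (c * x + b) * c)) x := by
    have h4 : HasDerivAt (fun x' => deriv f (c * x' + b)) (deriv (deriv f) (c * x + b) * c) x := by
      have h5 := h2.comp x h1
      exact h5
    exact h4.const_mul c
  rw [h3.deriv]; ring

lemma time_deriv_comp (f : ℝ → ℝ → ℝ)
    (hf : Differentiable ℝ (fun p : ℝ × ℝ => f p.1 p.2)) {σ : ℝ → ℝ} {σ' t : ℝ}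
    (hσ : HasDerivAt σ σ' t) :
    deriv (fun t' => f (σ t') t') t
      = σ' * deriv (fun s => f s t) (σ t) + deriv (fun τ => f (σ t) τ) t := by
  set P : ℝ × ℝ → ℝ := fun p => f p.1 p.2 with hP
  set L := fderiv ℝ P (σ t, t) with hLdef
  have hL : HasFDerivAt P L (σ t, t) := (hf _).hasFDerivAt
  have hγ : HasDerivAt (fun t' => ((σ t', t') : ℝ × ℝ)) (σ', 1) t :=
    hσ.prodMk (hasDerivAt_id t)
  have h1 : HasDerivAt (fun t' => f (σ t') t') (L (σ', 1)) t := by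
    have h := HasFDerivAt.comp_hasDerivAt (f := fun t' => ((σ t', t') : ℝ × ℝ)) t hL hγ
    exact h
  have hs : HasDerivAt (fun s => f s t) (L (1, 0)) (σ t) := by
    have h := HasFDerivAt.comp_hasDerivAt (f := fun s => ((s, t) : ℝ × ℝ)) (σ t) hL
      ((hasDerivAt_id (σ t)).prodMk (hasDerivAt_const (σ t) t))
    exact h
  have ht2 : HasDerivAt (fun τ => f (σ t) τ) (L (0, 1)) t := by
    have h := HasFDerivAt.comp_hasDerivAt (f := fun τ => ((σ t, τ) : ℝ × ℝ)) t hL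
      ((hasDerivAt_const t (σ t)).prodMk (hasDerivAt_id t))
    exact h
  rw [h1.deriv, hs.deriv, ht2.deriv]
  have hv : (σ', (1 : ℝ)) = σ' • ((1 : ℝ), (0 : ℝ)) + ((0 : ℝ), (1 : ℝ)) := by
    simp [Prod.ext_iff]
  rw [hv, map_add, map_smul, smul_eq_mul]


/-- The coefficient `g(x,t)`: `(d(t)/d)²` for `x < d` and `((1-d(t))/(1-d))²` for `x > d`. -/
noncomputable def gfun (d : ℝ) (dd : ℝ → ℝ) (x t : ℝ) : ℝ :=
  if x < d then (dd t / d) ^ 2 else ((1 - dd t) / (1 - d)) ^ 2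

/-- The change of variables: `s(x,t) = (d(t)/d)x` for `x ≤ d` and
`s(x,t) = 1 - ((1-d(t))/(1-d))(1-x)` for `x ≥ d`. -/
noncomputable def smap (d : ℝ) (dd : ℝ → ℝ) (x t : ℝ) : ℝ :=
  if x ≤ d then (dd t / d) * x else 1 - ((1 - dd t) / (1 - d)) * (1 - x)

/-- `ψ_d(x) = (d-x)/d` for `x < d` and `(x-d)/(1-d)` for `x > d`. -/
noncomputable def psid (d x : ℝ) : ℝ :=
  if x < d then (d - x) / d else (x - d) / (1 - d)

/-- `κ(x,t) = sqrt(g(x,t)) (a(x,t) + a(d,t)(ψ_d(x) - 1))`, where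
`a(x,t) = â(s(x,t),t)` and `a(d,t) = â(d(t),t)`. -/
noncomputable def kappa (ahat : ℝ → ℝ → ℝ) (d : ℝ) (dd : ℝ → ℝ) (x t : ℝ) : ℝ :=
  Real.sqrt (gfun d dd x t) *
    (ahat (smap d dd x t) t + ahat (dd t) t * (psid d x - 1))

/-- The transformed operator `(𝓛F)(x,t) = -ε F_xx + κ F_x + g F_t`. -/
noncomputable def LL (ε : ℝ) (ahat : ℝ → ℝ → ℝ) (d : ℝ) (dd : ℝ → ℝ)
    (F : ℝ → ℝ → ℝ) (x t : ℝ) : ℝ :=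
  -ε * iteratedDeriv 2 (fun x' => F x' t) x
    + kappa ahat d dd x t * deriv (fun x' => F x' t) x
    + gfun d dd x t * deriv (fun t' => F x t') t

/-- The operator `L̂_d F = -ε F_ss + â(d(t),t) F_s + F_t`. -/
noncomputable def Ld (ε : ℝ) (a : ℝ → ℝ → ℝ) (dd : ℝ → ℝ) (F : ℝ → ℝ → ℝ) (s t : ℝ) : ℝ :=
  -ε * iteratedDeriv 2 (fun x => F x t) s
    + a (dd t) t * deriv (fun x => F x t) s
    + deriv (fun τ => F s τ) t

/-- if `Fhat` is twice continuously differentiable and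
`F(x,t) = Fhat(s(x,t),t)`, then for `t ∈ (0,T]` and `x ∈ (0,1)` with `x ≠ d`:
`(𝓛F)(x,t) = g(x,t)(L̂_d Fhat)(s(x,t),t)
  + sqrt(g(x,t))(a(x,t) - a(d,t)) ∂F/∂x(x,t)`. -/
theorem stmt_12
    (ε T d α : ℝ) (hε : 0 < ε) (hT : 0 < T) (hd : d ∈ Set.Ioo (0 : ℝ) 1) (hα : 0 < α)
    (ahat : ℝ → ℝ → ℝ)
    (haC1 : ContDiffOn ℝ 1 (fun p : ℝ × ℝ => ahat p.1 p.2)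
      (Set.Icc 0 1 ×ˢ Set.Icc 0 T))
    (haα : ∀ s ∈ Set.Icc (0 : ℝ) 1, ∀ t ∈ Set.Icc (0 : ℝ) T, α ≤ ahat s t)
    (dd : ℝ → ℝ)
    (hddODE : ∀ t ∈ Set.Icc (0 : ℝ) T, HasDerivAt dd (ahat (dd t) t) t)
    (hdd0 : dd 0 = d)
    (hddQ : ∀ t ∈ Set.Icc (0 : ℝ) T, dd t ∈ Set.Ioo (0 : ℝ) 1)
    (hddT : dd T < 1)
    (Fhat : ℝ → ℝ → ℝ)
    (hFhat : ContDiff ℝ 2 (fun p : ℝ × ℝ => Fhat p.1 p.2)) :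
    ∀ t ∈ Set.Ioc (0 : ℝ) T, ∀ x ∈ Set.Ioo (0 : ℝ) 1, x ≠ d →
      LL ε ahat d dd (fun x' t' => Fhat (smap d dd x' t') t') x t
        = gfun d dd x t * Ld ε ahat dd Fhat (smap d dd x t) t
          + Real.sqrt (gfun d dd x t) * (ahat (smap d dd x t) t - ahat (dd t) t)
            * deriv (fun x' => Fhat (smap d dd x' t) t) x := by

  intro t ht x hx hxd
  have htI : t ∈ Set.Icc (0 : ℝ) T := Set.Ioc_subset_Icc_self ht
  have hdt := hddQ t htI
  have hd0 : (0 : ℝ) < d := hd.1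
  have hd1 : d < 1 := hd.2
  have hP : Differentiable ℝ (fun p : ℝ × ℝ => Fhat p.1 p.2) :=
    hFhat.differentiable two_ne_zero
  have h1var : ∀ τ : ℝ, ContDiff ℝ 2 (fun s => Fhat s τ) := fun τ =>
    hFhat.comp (contDiff_id.prodMk contDiff_const)
  have hODE := hddODE t htI
  rcases hxd.lt_or_gt with hlt | hgt
  · -- x < d
    have hcpos : 0 < dd t / d := div_pos hdt.1 hd0
    have hsx : smap d dd x t = dd t / d * x + 0 := by
      rw [smap, if_pos hlt.le]; ring
    have hev : (fun x' => Fhat (smap d dd x' t) t)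
        =ᶠ[nhds x] (fun x' => Fhat (dd t / d * x' + 0) t) := by
      filter_upwards [Iio_mem_nhds hlt] with y hy
      rw [smap, if_pos (le_of_lt hy)]; norm_num
    have hFx : deriv (fun x' => Fhat (smap d dd x' t) t) x
        = dd t / d * deriv (fun s => Fhat s t) (dd t / d * x + 0) := by
      rw [hev.deriv_eq, deriv_affine_comp _ ((h1var t).differentiable two_ne_zero)]
    have hFxx : iteratedDeriv 2 (fun x' => Fhat (smap d dd x' t) t) x
        = (dd t / d) ^ 2 * iteratedDeriv 2 (fun s => Fhat s t) (dd t / d * x + 0) := by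
      rw [hev.iteratedDeriv_eq 2, iter2_affine_comp _ (h1var t)]
    have hσ : HasDerivAt (fun t' => x / d * dd t') (x / d * ahat (dd t) t) t :=
      hODE.const_mul (x / d)
    have hteq : (fun t' => Fhat (smap d dd x t') t')
        = (fun t' => Fhat (x / d * dd t') t') := by
      funext t'
      rw [smap, if_pos hlt.le]
      have : dd t' / d * x = x / d * dd t' := by ring
      rw [this]
    have hFt : deriv (fun t' => Fhat (smap d dd x t') t') t
        = x / d * ahat (dd t) t * deriv (fun s => Fhat s t) (x / d * dd t)
          + deriv (fun τ => Fhat (x / d * dd t) τ) t := by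
      rw [hteq]; exact time_deriv_comp Fhat hP hσ
    have hpt : x / d * dd t = dd t / d * x + 0 := by ring
    rw [hpt] at hFt
    simp only [LL, Ld, kappa, gfun, psid, if_pos hlt]
    rw [hsx, hFx, hFxx, hFt, Real.sqrt_sq hcpos.le]
    field_simp
    ring
  · -- x > d
    have h1d : (0 : ℝ) < 1 - d := by linarith
    have hcpos : 0 < (1 - dd t) / (1 - d) := div_pos (by linarith [hdt.2]) h1d
    have hsx : smap d dd x t
        = (1 - dd t) / (1 - d) * x + (1 - (1 - dd t) / (1 - d)) := by
      rw [smap, if_neg (not_le.mpr hgt)]; ring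
    have hev : (fun x' => Fhat (smap d dd x' t) t)
        =ᶠ[nhds x]
          (fun x' => Fhat ((1 - dd t) / (1 - d) * x' + (1 - (1 - dd t) / (1 - d))) t) := by
      filter_upwards [Ioi_mem_nhds hgt] with y hy
      rw [smap, if_neg (not_le.mpr hy)]
      have : 1 - (1 - dd t) / (1 - d) * (1 - y)
          = (1 - dd t) / (1 - d) * y + (1 - (1 - dd t) / (1 - d)) := by ring
      rw [this]
    have hFx : deriv (fun x' => Fhat (smap d dd x' t) t) x
        = (1 - dd t) / (1 - d)
          * deriv (fun s => Fhat s t)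
            ((1 - dd t) / (1 - d) * x + (1 - (1 - dd t) / (1 - d))) := by
      rw [hev.deriv_eq, deriv_affine_comp _ ((h1var t).differentiable two_ne_zero)]
    have hFxx : iteratedDeriv 2 (fun x' => Fhat (smap d dd x' t) t) x
        = ((1 - dd t) / (1 - d)) ^ 2
          * iteratedDeriv 2 (fun s => Fhat s t)
            ((1 - dd t) / (1 - d) * x + (1 - (1 - dd t) / (1 - d))) := by
      rw [hev.iteratedDeriv_eq 2, iter2_affine_comp _ (h1var t)]
    have hσ : HasDerivAt (fun t' => (1 - x) / (1 - d) * dd t' + (1 - (1 - x) / (1 - d)))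
        ((1 - x) / (1 - d) * ahat (dd t) t) t :=
      (hODE.const_mul ((1 - x) / (1 - d))).add_const _
    have hteq : (fun t' => Fhat (smap d dd x t') t')
        = (fun t' => Fhat ((1 - x) / (1 - d) * dd t' + (1 - (1 - x) / (1 - d))) t') := by
      funext t'
      rw [smap, if_neg (not_le.mpr hgt)]
      have : 1 - (1 - dd t') / (1 - d) * (1 - x)
          = (1 - x) / (1 - d) * dd t' + (1 - (1 - x) / (1 - d)) := by ring
      rw [this]
    have hFt : deriv (fun t' => Fhat (smap d dd x t') t') t
        = (1 - x) / (1 - d) * ahat (dd t) t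
            * deriv (fun s => Fhat s t)
              ((1 - x) / (1 - d) * dd t + (1 - (1 - x) / (1 - d)))
          + deriv (fun τ => Fhat ((1 - x) / (1 - d) * dd t + (1 - (1 - x) / (1 - d))) τ) t := by
      rw [hteq]; exact time_deriv_comp Fhat hP hσ
    have hpt : (1 - x) / (1 - d) * dd t + (1 - (1 - x) / (1 - d))
        = (1 - dd t) / (1 - d) * x + (1 - (1 - dd t) / (1 - d)) := by ring
    rw [hpt] at hFt
    simp only [LL, Ld, kappa, gfun, psid, if_neg (not_lt.mpr hgt.le)]
    rw [hsx, hFx, hFxx, hFt, Real.sqrt_sq hcpos.le]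
    field_simp
    ring
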